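/- (Newton decrement bound for self-concordant functions.) Let D ⊆ ℝ^m be open and convex and let g : D → ℝ be convex, three times continuously differentiable, with ∇²g(x) positive definite for every x ∈ D, and self-concordant: |∇³g(x)[u,u,u]| ≤ 2(uᵀ∇²g(x)u)^{3/2} for all x ∈ D and u ∈ ℝ^m. Suppose g attains its minimum over D at a point x⁺ ∈ D. Define the local norm ‖v‖_x = √(vᵀ∇²g(x)v) and the Newton decrement λ(x, g) = ‖(∇²g(x))^{−1}∇g(x)‖_x. Then for every x ∈ D with λ(x, g) ≤ 1/2, one has ‖x − x⁺‖_x ≤ 2λ(x, g). -/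

import Mathlib

open Set
open scoped RealInnerProductSpace

noncomputable section

section Aux

variable {m : ℕ}

local notation "E" => EuclideanSpace ℝ (Fin m)

set_option maxHeartbeats 1000000 in
/-- The third directional derivative identified with the derivative of the Hessian. -/
lemma aux_third_deriv (D : Set (EuclideanSpace ℝ (Fin m))) (hD : IsOpen D)
    (g : EuclideanSpace ℝ (Fin m) → ℝ) (hgC3 : ContDiffOn ℝ 3 g D)
    (gg : EuclideanSpace ℝ (Fin m) → EuclideanSpace ℝ (Fin m))
    (hgrad : ∀ x ∈ D, HasGradientAt g (gg x) x) :
    (∀ z ∈ D, ContDiffAt ℝ 2 gg z) ∧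
    (∀ z ∈ D, DifferentiableAt ℝ (fun y => fderiv ℝ gg y) z) ∧
    (∀ z ∈ D, ∀ u : EuclideanSpace ℝ (Fin m),
      iteratedFDeriv ℝ 3 g z ![u, u, u] = ⟪fderiv ℝ (fun y => fderiv ℝ gg y) z u u, u⟫) := by
  set td := InnerProductSpace.toDual ℝ (EuclideanSpace ℝ (Fin m)) with htd
  have hgradD : ∀ z ∈ D, fderiv ℝ g z = td (gg z) := fun z hz =>
    ((hgrad z hz).hasFDerivAt).fderiv
  have hgg2 : ∀ z ∈ D, ContDiffAt ℝ 2 gg z := by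
    intro z hz
    have hC : ContDiffAt ℝ 3 g z := hgC3.contDiffAt (hD.mem_nhds hz)
    have h1 : ContDiffAt ℝ 2 (fderiv ℝ g) z := hC.fderiv_right (by norm_num)
    have h2 : ContDiffAt ℝ 2 (fun y => td.symm (fderiv ℝ g y)) z :=
      td.symm.contDiff.contDiffAt.comp z h1
    apply h2.congr_of_eventuallyEq
    filter_upwards [hD.mem_nhds hz] with w hw
    rw [hgradD w hw, LinearIsometryEquiv.symm_apply_apply]
  have hH'd : ∀ z ∈ D, DifferentiableAt ℝ (fun y => fderiv ℝ gg y) z := by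
    intro z hz
    exact ((hgg2 z hz).fderiv_right (m := 1) (by norm_num)).differentiableAt (by norm_num)
  refine ⟨hgg2, hH'd, ?_⟩
  intro z hz u
  set tdL : EuclideanSpace ℝ (Fin m) →L[ℝ] (EuclideanSpace ℝ (Fin m) →L[ℝ] ℝ) :=
    (td.toContinuousLinearEquiv : EuclideanSpace ℝ (Fin m) ≃L[ℝ] _).toContinuousLinearMap
    with htdL
  have htdL_apply : ∀ v, tdL v = td v := fun v => rfl
  -- step 1 : express iteratedFDeriv 3 via iterated fderivs
  have hinit : Fin.init ![u, u, u] = ![u, u] := by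
    funext i; fin_cases i <;> rfl
  have e1 : iteratedFDeriv ℝ 3 g z ![u, u, u]
      = fderiv ℝ (fderiv ℝ (fderiv ℝ g)) z u u u := by
    have h := iteratedFDeriv_succ_apply_right (𝕜 := ℝ) (f := g) (x := z) (n := 2) ![u, u, u]
    rw [hinit, iteratedFDeriv_two_apply] at h
    simpa using h
  -- step 2 : fderiv (fderiv g) on D
  have hfd2 : ∀ w ∈ D, fderiv ℝ (fderiv ℝ g) w = tdL.comp (fderiv ℝ gg w) := by
    intro w hw
    have hdiff : DifferentiableAt ℝ gg w := ((hgg2 w hw).differentiableAt (by norm_num))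
    have h1 : HasFDerivAt (fun y => tdL (gg y)) (tdL.comp (fderiv ℝ gg w)) w :=
      tdL.hasFDerivAt.comp w hdiff.hasFDerivAt
    have h2 : fderiv ℝ (fun y => tdL (gg y)) w = tdL.comp (fderiv ℝ gg w) := h1.fderiv
    rw [← h2]
    apply Filter.EventuallyEq.fderiv_eq
    filter_upwards [hD.mem_nhds hw] with v hv
    rw [hgradD v hv, htdL_apply]
  -- step 3 : differentiate once more
  have e3 : fderiv ℝ (fderiv ℝ (fderiv ℝ g)) z
      = ((ContinuousLinearMap.compL ℝ (EuclideanSpace ℝ (Fin m)) (EuclideanSpace ℝ (Fin m))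
          (EuclideanSpace ℝ (Fin m) →L[ℝ] ℝ)) tdL).comp
          (fderiv ℝ (fun y => fderiv ℝ gg y) z) := by
    have h1 : HasFDerivAt (fun y => tdL.comp (fderiv ℝ gg y))
        (((ContinuousLinearMap.compL ℝ (EuclideanSpace ℝ (Fin m)) (EuclideanSpace ℝ (Fin m))
          (EuclideanSpace ℝ (Fin m) →L[ℝ] ℝ)) tdL).comp
          (fderiv ℝ (fun y => fderiv ℝ gg y) z)) z :=
      by
        have h2 : HasFDerivAt ((((ContinuousLinearMap.compL ℝ (EuclideanSpace ℝ (Fin m))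
            (EuclideanSpace ℝ (Fin m)) (EuclideanSpace ℝ (Fin m) →L[ℝ] ℝ)) tdL) :
              (EuclideanSpace ℝ (Fin m) →L[ℝ] EuclideanSpace ℝ (Fin m)) →
                (EuclideanSpace ℝ (Fin m) →L[ℝ] (EuclideanSpace ℝ (Fin m) →L[ℝ] ℝ))) ∘
            (fun y => fderiv ℝ gg y))
            (((ContinuousLinearMap.compL ℝ (EuclideanSpace ℝ (Fin m)) (EuclideanSpace ℝ (Fin m))
              (EuclideanSpace ℝ (Fin m) →L[ℝ] ℝ)) tdL).comp
              (fderiv ℝ (fun y => fderiv ℝ gg y) z)) z :=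
          by
            exact HasFDerivAt.comp (g := ⇑((ContinuousLinearMap.compL ℝ (EuclideanSpace ℝ (Fin m))
              (EuclideanSpace ℝ (Fin m)) (EuclideanSpace ℝ (Fin m) →L[ℝ] ℝ)) tdL)) z (ContinuousLinearMap.hasFDerivAt _) (hH'd z hz).hasFDerivAt
        apply h2.congr_of_eventuallyEq
        filter_upwards with v
        rfl
    rw [← h1.fderiv]
    apply Filter.EventuallyEq.fderiv_eq
    filter_upwards [hD.mem_nhds hz] with v hv
    exact hfd2 v hv
  rw [e1, e3]
  simp only [ContinuousLinearMap.coe_comp', Function.comp_apply,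
    ContinuousLinearMap.compL_apply, ContinuousLinearMap.comp_apply]
  rw [htdL_apply, InnerProductSpace.toDual_apply_apply]

end Aux

set_option maxHeartbeats 2000000

/-- Newton decrement bound for self-concordant functions: if
`λ(x, g) = ‖(∇²g(x))⁻¹ ∇g(x)‖_x ≤ 1/2` and `g` attains its minimum over its open convex
domain at `x⁺`, then `‖x − x⁺‖_x ≤ 2 λ(x, g)`, where `‖v‖_x = √(vᵀ ∇²g(x) v)`. -/
theorem newton_decrement_self_concordant {m : ℕ}
    (D : Set (EuclideanSpace ℝ (Fin m))) (hD : IsOpen D) (hDconv : Convex ℝ D)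
    (g : EuclideanSpace ℝ (Fin m) → ℝ)
    (hgconv : ConvexOn ℝ D g) (hgC3 : ContDiffOn ℝ 3 g D)
    (gg : EuclideanSpace ℝ (Fin m) → EuclideanSpace ℝ (Fin m))
    (H Hinv : EuclideanSpace ℝ (Fin m) →
      (EuclideanSpace ℝ (Fin m) →L[ℝ] EuclideanSpace ℝ (Fin m)))
    (hgrad : ∀ x ∈ D, HasGradientAt g (gg x) x)
    (hHess : ∀ x ∈ D, HasFDerivAt gg (H x) x)
    (hsymm : ∀ x ∈ D, ∀ u v, ⟪H x u, v⟫ = ⟪u, H x v⟫)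
    (hpos : ∀ x ∈ D, ∀ u : EuclideanSpace ℝ (Fin m), u ≠ 0 → 0 < ⟪H x u, u⟫)
    (hHinv : ∀ x ∈ D, (∀ u, Hinv x (H x u) = u) ∧ (∀ u, H x (Hinv x u) = u))
    (hsc : ∀ x ∈ D, ∀ u : EuclideanSpace ℝ (Fin m),
      |iteratedFDeriv ℝ 3 g x ![u, u, u]| ≤ 2 * (⟪H x u, u⟫) ^ ((3:ℝ)/2))
    (xplus : EuclideanSpace ℝ (Fin m)) (hxplus : xplus ∈ D)
    (hmin : IsMinOn g D xplus) :
    ∀ x ∈ D,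
      Real.sqrt ⟪H x (Hinv x (gg x)), Hinv x (gg x)⟫ ≤ 1/2 →
      Real.sqrt ⟪H x (x - xplus), x - xplus⟫ ≤
        2 * Real.sqrt ⟪H x (Hinv x (gg x)), Hinv x (gg x)⟫ := by
  intro x hx hlam
  by_cases hh0 : x - xplus = 0
  · rw [hh0]
    simp only [map_zero, inner_zero_left, Real.sqrt_zero]
    positivity
  obtain ⟨hgg2, hH'd, key3⟩ := aux_third_deriv D hD g hgC3 gg hgrad
  set h : EuclideanSpace ℝ (Fin m) := x - xplus with hhdef
  set n : EuclideanSpace ℝ (Fin m) := Hinv x (gg x) with hndef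
  set lam : ℝ := Real.sqrt ⟪H x n, n⟫ with hlamdef
  set r : ℝ := Real.sqrt ⟪H x h, h⟫ with hrdef
  have hrpos2 : 0 < ⟪H x h, h⟫ := hpos x hx h hh0
  have hr : 0 < r := Real.sqrt_pos.2 hrpos2
  have hr2 : r ^ 2 = ⟪H x h, h⟫ := Real.sq_sqrt hrpos2.le
  have hlam0 : 0 ≤ lam := Real.sqrt_nonneg _
  -- the segment
  set y : ℝ → EuclideanSpace ℝ (Fin m) := fun t => xplus + t • h with hydef
  have hy0 : y 0 = xplus := by simp [hydef]
  have hy1 : y 1 = x := by simp [hydef, hhdef]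
  have hyD : ∀ t ∈ Icc (0:ℝ) 1, y t ∈ D := by
    intro t ht
    have hyt : y t = (1 - t) • xplus + t • x := by
      simp only [hydef, hhdef]
      module
    rw [hyt]
    exact hDconv hxplus hx (by linarith [ht.2]) (by linarith [ht.1]) (by ring)
  have hyd : ∀ t : ℝ, HasDerivAt y h t := by
    intro t
    have h1 : HasDerivAt (fun s : ℝ => s • h) ((1:ℝ) • h) t := (hasDerivAt_id t).smul_const h
    simpa [hydef] using h1.const_add xplus
  -- the second-derivative function along the segment
  set H' : EuclideanSpace ℝ (Fin m) → (EuclideanSpace ℝ (Fin m) →L[ℝ] EuclideanSpace ℝ (Fin m)) :=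
    fun z => fderiv ℝ gg z with hH'def
  have hHeq : ∀ z ∈ D, H' z = H z := fun z hz => (hHess z hz).fderiv
  set B : (EuclideanSpace ℝ (Fin m) →L[ℝ] EuclideanSpace ℝ (Fin m)) →L[ℝ] ℝ :=
    (innerSL ℝ h).comp (ContinuousLinearMap.apply ℝ (EuclideanSpace ℝ (Fin m)) h) with hBdef
  have hBapp : ∀ T, B T = ⟪h, T h⟫ := fun T => rfl
  set A : ℝ → ℝ := fun t => B (H' (y t)) with hAdef
  have hAval : ∀ t ∈ Icc (0:ℝ) 1, A t = ⟪H (y t) h, h⟫ := by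
    intro t ht
    rw [hAdef]
    simp only [hBapp, hHeq (y t) (hyD t ht)]
    exact real_inner_comm _ _
  have hApos : ∀ t ∈ Icc (0:ℝ) 1, 0 < A t := by
    intro t ht
    rw [hAval t ht]
    exact hpos (y t) (hyD t ht) h hh0
  have hA1 : A 1 = r ^ 2 := by rw [hAval 1 (right_mem_Icc.2 zero_le_one), hy1, hr2]
  -- derivative of A
  set Ader : ℝ → ℝ := fun t => B (fderiv ℝ H' (y t) h) with hAderdef
  have hA' : ∀ t ∈ Icc (0:ℝ) 1, HasDerivAt A (Ader t) t := by
    intro t ht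
    have h1 : HasDerivAt (fun s => H' (y s)) (fderiv ℝ H' (y t) h) t :=
      (hH'd (y t) (hyD t ht)).hasFDerivAt.comp_hasDerivAt t (hyd t)
    exact B.hasFDerivAt.comp_hasDerivAt t h1
  have hAder_le : ∀ t ∈ Icc (0:ℝ) 1, |Ader t| ≤ 2 * Real.sqrt (A t) ^ 3 := by
    intro t ht
    have h1 : Ader t = iteratedFDeriv ℝ 3 g (y t) ![h, h, h] := by
      rw [key3 (y t) (hyD t ht) h, hAderdef]
      simp only [hBapp]
      exact (real_inner_comm _ _).symm
    have h2 := hsc (y t) (hyD t ht) h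
    rw [← h1] at h2
    have h3 : (⟪H (y t) h, h⟫ : ℝ) ^ ((3:ℝ)/2) = Real.sqrt (A t) ^ 3 := by
      rw [← hAval t ht]
      have ha : (0:ℝ) ≤ A t := (hApos t ht).le
      rw [Real.sqrt_eq_rpow, ← Real.rpow_natCast (A t ^ ((1:ℝ)/2)) 3, ← Real.rpow_mul ha]
      norm_num
    rw [h3] at h2
    exact h2
  -- the function b = 1/sqrt (A t) is 1-Lipschitz
  set b : ℝ → ℝ := fun t => (Real.sqrt (A t))⁻¹ with hbdef
  set bder : ℝ → ℝ := fun t => -(1 / (2 * Real.sqrt (A t)) * Ader t) / (Real.sqrt (A t)) ^ 2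
    with hbderdef
  have hb : ∀ t ∈ Icc (0:ℝ) 1, HasDerivAt b (bder t) t := by
    intro t ht
    have hs0 : Real.sqrt (A t) ≠ 0 := (Real.sqrt_pos.2 (hApos t ht)).ne'
    have h1 : HasDerivAt (fun s => Real.sqrt (A s)) (1 / (2 * Real.sqrt (A t)) * Ader t) t :=
      (Real.hasDerivAt_sqrt (hApos t ht).ne').comp t (hA' t ht)
    exact h1.inv hs0
  have hbbound : ∀ t ∈ Icc (0:ℝ) 1, ‖bder t‖ ≤ 1 := by
    intro t ht
    have hs : 0 < Real.sqrt (A t) := Real.sqrt_pos.2 (hApos t ht)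
    have hs3 : (0:ℝ) < 2 * Real.sqrt (A t) ^ 3 := by positivity
    have he : bder t = -(Ader t / (2 * Real.sqrt (A t) ^ 3)) := by
      simp only [hbderdef]
      ring
    rw [Real.norm_eq_abs, he, abs_neg, abs_div, abs_of_pos hs3]
    rw [div_le_one hs3]
    exact hAder_le t ht
  have hlip : ∀ t ∈ Icc (0:ℝ) 1, b t ≤ r⁻¹ + (1 - t) := by
    intro t ht
    have h1 := (convex_Icc (0:ℝ) 1).norm_image_sub_le_of_norm_hasDerivWithin_le
      (fun s hs => (hb s hs).hasDerivWithinAt) hbbound ht (right_mem_Icc.2 zero_le_one)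
    have hb1 : b 1 = r⁻¹ := by
      rw [hbdef]
      simp only [hA1]
      rw [Real.sqrt_sq hr.le]
    have hnorm : ‖(1:ℝ) - t‖ = 1 - t := by
      rw [Real.norm_eq_abs, abs_of_nonneg (by linarith [ht.2])]
    rw [Real.norm_eq_abs, hnorm, one_mul] at h1
    have h2 := abs_le.1 h1
    rw [hb1] at h2
    linarith [h2.1]
  -- lower bound for A
  have hAlow : ∀ t ∈ Icc (0:ℝ) 1, ((r⁻¹ + (1 - t)) ^ 2)⁻¹ ≤ A t := by
    intro t ht
    have hs : 0 < Real.sqrt (A t) := Real.sqrt_pos.2 (hApos t ht)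
    have hM : 0 < r⁻¹ + (1 - t) := by
      have : 0 < r⁻¹ := inv_pos.2 hr
      linarith [ht.2]
    have h1 : (1:ℝ) ≤ (r⁻¹ + (1 - t)) * Real.sqrt (A t) := by
      have h2 := mul_le_mul_of_nonneg_right (hlip t ht) hs.le
      rw [hbdef] at h2
      rwa [inv_mul_cancel₀ hs.ne'] at h2
    have h3 : (r⁻¹ + (1 - t))⁻¹ ≤ Real.sqrt (A t) := by
      calc (r⁻¹ + (1 - t))⁻¹ = (r⁻¹ + (1 - t))⁻¹ * 1 := (mul_one _).symm
        _ ≤ (r⁻¹ + (1 - t))⁻¹ * ((r⁻¹ + (1 - t)) * Real.sqrt (A t)) :=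
            mul_le_mul_of_nonneg_left h1 (by positivity)
        _ = Real.sqrt (A t) := by rw [inv_mul_cancel_left₀ hM.ne']
    have h4 : ((r⁻¹ + (1 - t))⁻¹) ^ 2 ≤ Real.sqrt (A t) ^ 2 :=
      pow_le_pow_left₀ (by positivity) h3 2
    rw [Real.sq_sqrt (hApos t ht).le] at h4
    rw [← inv_pow]
    exact h4
  -- comparison function F
  set F : ℝ → ℝ := fun t => (r⁻¹ + (1 - t))⁻¹ with hFdef
  have hF : ∀ t ∈ Icc (0:ℝ) 1, HasDerivAt F (((r⁻¹ + (1 - t)) ^ 2)⁻¹) t := by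
    intro t ht
    have hM : 0 < r⁻¹ + (1 - t) := by
      have : 0 < r⁻¹ := inv_pos.2 hr
      linarith [ht.2]
    have h1 : HasDerivAt (fun s : ℝ => r⁻¹ + (1 - s)) (-1) t := by
      simpa using ((hasDerivAt_id t).const_sub 1).const_add r⁻¹
    have h2 := h1.inv hM.ne'
    rw [show ((r⁻¹ + (1 - t)) ^ 2)⁻¹ = - -1 / (r⁻¹ + (1 - t)) ^ 2 by ring]
    exact h2
  -- the function φ
  set φ : ℝ → ℝ := fun t => (innerSL ℝ h) (gg (y t)) with hφdef
  have hφ : ∀ t ∈ Icc (0:ℝ) 1, HasDerivAt φ (A t) t := by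
    intro t ht
    have h1 : HasDerivAt (fun s => gg (y s)) (H (y t) h) t :=
      (hHess (y t) (hyD t ht)).comp_hasDerivAt t (hyd t)
    have h2 := (innerSL ℝ h).hasFDerivAt.comp_hasDerivAt t h1
    have e : A t = (innerSL ℝ h) (H (y t) h) := by
      rw [hAval t ht, innerSL_apply_apply]
      exact real_inner_comm _ _
    rw [e]
    exact h2
  -- monotonicity of φ - F
  have hG : ∀ t ∈ Icc (0:ℝ) 1, HasDerivAt (fun s => φ s - F s)
      (A t - ((r⁻¹ + (1 - t)) ^ 2)⁻¹) t := fun t ht => (hφ t ht).sub (hF t ht)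
  have hmono : MonotoneOn (fun s => φ s - F s) (Icc (0:ℝ) 1) := by
    apply monotoneOn_of_deriv_nonneg (convex_Icc 0 1)
    · intro t ht
      exact (hG t ht).continuousAt.continuousWithinAt
    · intro t ht
      rw [interior_Icc] at ht
      exact (hG t (Ioo_subset_Icc_self ht)).differentiableAt.differentiableWithinAt
    · intro t ht
      rw [interior_Icc] at ht
      rw [(hG t (Ioo_subset_Icc_self ht)).deriv]
      have := hAlow t (Ioo_subset_Icc_self ht)
      linarith
  have hkey := hmono (left_mem_Icc.2 zero_le_one) (right_mem_Icc.2 zero_le_one) zero_le_one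
  -- the gradient vanishes at the minimum
  have hgg0 : gg xplus = 0 := by
    have h1 : IsLocalMin g xplus := hmin.isLocalMin (hD.mem_nhds hxplus)
    have h2 := h1.hasFDerivAt_eq_zero (hgrad xplus hxplus).hasFDerivAt
    apply (InnerProductSpace.toDual ℝ (EuclideanSpace ℝ (Fin m))).injective
    rw [h2]
    simp
  have hφ0 : φ 0 = 0 := by rw [hφdef]; simp [hy0, hgg0]
  have hφ1 : φ 1 = ⟪h, gg x⟫ := by simp only [hφdef, hy1, innerSL_apply_apply]
  have hF0 : F 0 = (r⁻¹ + 1)⁻¹ := by rw [hFdef]; norm_num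
  have hF1 : F 1 = r := by rw [hFdef]; simp
  -- Cauchy-Schwarz for the Hessian inner product
  have hcnonneg : (0:ℝ) ≤ ⟪H x n, n⟫ := by
    rcases eq_or_ne n 0 with hn | hn
    · rw [hn]; simp
    · exact (hpos x hx n hn).le
  have hcs : ⟪h, gg x⟫ ≤ lam * r := by
    have hggx : gg x = H x n := ((hHinv x hx).2 (gg x)).symm
    have hsym1 : ⟪H x h, n⟫ = ⟪H x n, h⟫ := by
      rw [hsymm x hx h n]; exact real_inner_comm _ _
    set aa : ℝ := ⟪H x h, h⟫ with haa
    set cc : ℝ := ⟪H x n, n⟫ with hcc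
    set bb : ℝ := ⟪H x n, h⟫ with hbb
    have hq : ∀ s : ℝ, 0 ≤ aa * (s * s) + (2 * bb) * s + cc := by
      intro s
      have hval : ⟪H x (n + s • h), n + s • h⟫
          = aa * (s * s) + (2 * bb) * s + cc := by
        rw [map_add, map_smul]
        simp only [inner_add_left, inner_add_right, real_inner_smul_left,
          real_inner_smul_right]
        rw [hsym1]
        ring
      rcases eq_or_ne (n + s • h) 0 with h0 | h0
      · rw [← hval, h0]; simp
      · rw [← hval]; exact (hpos x hx _ h0).le
    have hdisc := discrim_le_zero hq
    simp only [discrim] at hdisc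
    have hexp : (2 * bb) ^ 2 - 4 * aa * cc = 4 * (bb * bb) - 4 * (aa * cc) := by ring
    rw [hexp] at hdisc
    have hsq : bb ^ 2 ≤ cc * aa := by nlinarith [hdisc]
    have h5 : ⟪h, gg x⟫ = bb := by rw [hggx, hbb]; exact real_inner_comm _ _
    rw [h5]
    calc bb ≤ |bb| := le_abs_self _
      _ = Real.sqrt (bb ^ 2) := (Real.sqrt_sq_eq_abs _).symm
      _ ≤ Real.sqrt (cc * aa) := Real.sqrt_le_sqrt hsq
      _ = lam * r := Real.sqrt_mul hcnonneg _
  -- final arithmetic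
  have hfinal : r - (r⁻¹ + 1)⁻¹ ≤ lam * r := by
    simp only [] at hkey
    rw [hφ0, hφ1, hF0, hF1] at hkey
    linarith [hcs]
  have hinv1 : (r⁻¹ + 1)⁻¹ = r / (1 + r) := by
    have hrr : r⁻¹ + 1 = (1 + r) / r := by field_simp
    rw [hrr, inv_div]
  rw [hinv1] at hfinal
  have hpos1 : (0:ℝ) < 1 + r := by linarith
  have hexp : (r - r / (1 + r)) * (1 + r) = r * r := by field_simp; ring
  have h2 := mul_le_mul_of_nonneg_right hfinal hpos1.le
  rw [hexp] at h2
  have h4 : lam * (r * r) ≤ (1/2) * (r * r) :=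
    mul_le_mul_of_nonneg_right hlam (by positivity)
  nlinarith [h2, h4, hr, hlam0, mul_pos hr hr]

end
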